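/- Define f : ℝ² → ℝ by f(z,λ) = (z² + λ²)(λz − 1)² and F : ℝ⁴ → ℝ² by F(x,y,z,λ) = (x² − y + y²·f(z,λ), λ). Then for every b > 0 and every λ ∈ ℝ, the fiber F⁻¹(b,λ) is a path-connected subset of ℝ⁴. -/

import Mathlib

lemma joinedIn_aux {X : Type*} [TopologicalSpace X] {S : Set X} {p q : X} (γ : ℝ → X)
    (hγ : Continuous γ) (h0 : γ 0 = p) (h1 : γ 1 = q)
    (h : ∀ t : ℝ, 0 ≤ t → t ≤ 1 → γ t ∈ S) : JoinedIn S p q := by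
  subst h0 h1
  exact ⟨⟨⟨fun t => γ t, hγ.comp continuous_subtype_val⟩, by simp, by simp⟩,
    fun t => h t t.2.1 t.2.2⟩

/-- For `f(z,λ) = (z² + λ²)(λz − 1)²` and
`F(x,y,z,λ) = (x² − y + y²f(z,λ), λ)`, every fiber `F⁻¹(b,λ)` with `b > 0` is
path-connected. -/
theorem stmt_6 (f : ℝ × ℝ → ℝ)
    (hf : ∀ z l : ℝ, f (z, l) = (z ^ 2 + l ^ 2) * (l * z - 1) ^ 2)
    (F : ℝ × ℝ × ℝ × ℝ → ℝ × ℝ)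
    (hF : ∀ x y z l : ℝ, F (x, y, z, l) = (x ^ 2 - y + y ^ 2 * f (z, l), l)) :
    ∀ b l : ℝ, 0 < b → IsPathConnected (F ⁻¹' {(b, l)}) := by
  intro b l hb
  have hg : ∀ z : ℝ, 0 ≤ f (z, l) := fun z => by rw [hf]; positivity
  obtain ⟨z₀, hz₀⟩ : ∃ z₀ : ℝ, f (z₀, l) = 0 := by
    by_cases hl : l = 0
    · exact ⟨0, by rw [hf]; subst hl; ring⟩
    · exact ⟨1 / l, by rw [hf]; field_simp; ring⟩
  set s := Real.sqrt b with hs_def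
  have hs : s ^ 2 = b := Real.sq_sqrt hb.le
  have hmem : ∀ x y z : ℝ, (x, y, z, l) ∈ F ⁻¹' {(b, l)} ↔
      x ^ 2 - y + y ^ 2 * f (z, l) = b := by
    intro x y z
    simp [Set.mem_preimage, hF x y z l, Prod.ext_iff]
  refine ⟨(s, 0, 0, l), (hmem s 0 0).2 (by rw [hs]; ring), ?_⟩
  rintro ⟨x, y, z, lam⟩ hp
  simp only [Set.mem_preimage, hF, Set.mem_singleton_iff, Prod.mk.injEq] at hp
  obtain ⟨heq, hlam⟩ := hp
  subst hlam
  set σ : ℝ := if 0 ≤ x then 1 else -1 with hσ_def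
  have hσ2 : σ ^ 2 = 1 := by
    by_cases h : 0 ≤ x <;> simp [hσ_def, h]
  have hσx : σ * Real.sqrt (x ^ 2) = x := by
    rw [Real.sqrt_sq_eq_abs]
    by_cases h : 0 ≤ x
    · simp [hσ_def, h, abs_of_nonneg h]
    · push_neg at h
      simp [hσ_def, not_le.2 h, abs_of_neg h]
  -- Segment A : from (x,y,z,l) to (σ*s, 0, z, lam)
  have hA : JoinedIn (F ⁻¹' {(b, lam)}) (x, y, z, lam) (σ * s, 0, z, lam) := by
    refine joinedIn_aux
      (fun t => (σ * Real.sqrt (b + (1 - t) * y - ((1 - t) * y) ^ 2 * f (z, lam)),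
        (1 - t) * y, z, lam)) (by fun_prop) ?_ ?_ ?_
    · have : b + (1 - (0:ℝ)) * y - ((1 - (0:ℝ)) * y) ^ 2 * f (z, lam) = x ^ 2 := by
        nlinarith [heq]
      simp only [this, hσx]
      norm_num
    · have : b + (1 - (1:ℝ)) * y - ((1 - (1:ℝ)) * y) ^ 2 * f (z, lam) = b := by ring
      simp [this, hs_def]
    · intro t ht0 ht1
      have hpos : 0 ≤ b + (1 - t) * y - ((1 - t) * y) ^ 2 * f (z, lam) := by
        nlinarith [sq_nonneg x, hg z, heq,
          mul_nonneg (mul_nonneg (mul_nonneg ht0 (sub_nonneg.2 ht1)) (sq_nonneg y)) (hg z)]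
      rw [hmem]
      rw [mul_pow, Real.sq_sqrt hpos, hσ2]
      ring
  -- Segment B : from (σ*s, 0, z, lam) to (σ*s, 0, z₀, lam)
  have hB : JoinedIn (F ⁻¹' {(b, lam)}) (σ * s, 0, z, lam) (σ * s, 0, z₀, lam) := by
    refine joinedIn_aux (fun t => (σ * s, 0, (1 - t) * z + t * z₀, lam))
      (by fun_prop) (by norm_num) (by norm_num) ?_
    intro t _ _
    rw [hmem, mul_pow, hσ2, hs]
    ring
  -- Segment C : from (σ*s, 0, z₀, lam) to (s, 0, z₀, lam)
  have hC : JoinedIn (F ⁻¹' {(b, lam)}) (σ * s, 0, z₀, lam) (s, 0, z₀, lam) := by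
    refine joinedIn_aux
      (fun t => (((1 - t) * σ + t) * s, (((1 - t) * σ + t) * s) ^ 2 - b, z₀, lam))
      (by fun_prop) ?_ ?_ ?_
    · have : (((1 - (0:ℝ)) * σ + 0) * s) ^ 2 - b = 0 := by
        rw [show ((1 - (0:ℝ)) * σ + 0) * s = σ * s by ring, mul_pow, hσ2, hs]; ring
      simp only [this]
      norm_num
    · have : (((1 - (1:ℝ)) * σ + 1) * s) ^ 2 - b = 0 := by
        rw [show ((1 - (1:ℝ)) * σ + 1) * s = s by ring, hs]; ring
      simp only [this]
      norm_num
    · intro t _ _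
      rw [hmem, hz₀]
      ring
  -- Segment D : from (s, 0, z₀, lam) to (s, 0, 0, lam)
  have hD : JoinedIn (F ⁻¹' {(b, lam)}) (s, 0, z₀, lam) (s, 0, 0, lam) := by
    refine joinedIn_aux (fun t => (s, 0, (1 - t) * z₀, lam))
      (by fun_prop) (by norm_num) (by norm_num) ?_
    intro t _ _
    rw [hmem, hs]
    ring
  exact (((hA.trans hB).trans hC).trans hD).symm
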